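/- (Entropic uncertainty relation for several measurements) Let U^{(1)},…,U^{(L)} be d×d unitary matrices with columns u_i^{(j)}, let ψ ∈ ℂ^d be a unit vector, and set p_i^{(j)} = |⟨u_i^{(j)}, ψ⟩|². Then the sum of the Shannon entropies of the L probability vectors p^{(1)},…,p^{(L)} satisfies ∑_{j=1}^L H(p^{(j)}) ≥ −∑_{k=1}^{dL−1} (𝒮_k − 𝒮_{k−1}) ln(𝒮_k − 𝒮_{k−1}). -/

import Mathlib

open scoped BigOperators Matrix ComplexConjugate ComplexOrder

/-- Shannon entropy of a finite real vector (natural logarithm). -/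
noncomputable def shannonEntropy {n : Type*} [Fintype n] (x : n → ℝ) : ℝ :=
  -∑ i, x i * Real.log (x i)

/-- Von Neumann entropy of a Hermitian matrix, `-∑ λᵢ ln λᵢ`. -/
noncomputable def vonNeumannEntropy {d : ℕ} {ρ : Matrix (Fin d) (Fin d) ℂ}
    (hρ : ρ.IsHermitian) : ℝ :=
  -∑ i, hρ.eigenvalues i * Real.log (hρ.eigenvalues i)

/-- The operator norm (largest singular value) of the `d × |S|` matrix whose columns are
the columns `u_i^{(j)}` of the unitaries `U j`, for `(i, j) ∈ S`. -/
noncomputable def colOpNorm {d L : ℕ} (U : Fin L → Matrix (Fin d) (Fin d) ℂ)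
    (S : Finset (Fin d × Fin L)) : ℝ :=
  sSup { r : ℝ | ∃ (x : Fin d → ℂ) (y : S → ℂ),
    (∑ a, ‖x a‖ ^ 2 = 1) ∧ (∑ s, ‖y s‖ ^ 2 = 1) ∧
    r = ‖∑ a, ∑ s : S, (starRingEnd ℂ) (x a) * U s.1.2 a s.1.1 * y s‖ }

/-- `multiS U k` is the coefficient `𝒮_k`: the maximal squared operator norm of a
`d × (k+1)` matrix formed by `k + 1` columns taken from the concatenation of the
unitaries `U j`. -/
noncomputable def multiS {d L : ℕ} (U : Fin L → Matrix (Fin d) (Fin d) ℂ) (k : ℕ) : ℝ :=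
  (sSup { r : ℝ | ∃ S : Finset (Fin d × Fin L), S.card = k + 1 ∧ r = colOpNorm U S }) ^ 2

open Finset Real Matrix ComplexConjugate


lemma abel_nonneg (n : ℕ) (c g : ℕ → ℝ)
    (hc : ∀ i j, i ≤ j → j < n → c i ≤ c j)
    (hD : ∀ k, k ≤ n → ∑ i ∈ range k, g i ≤ 0)
    (htot : ∑ i ∈ range n, g i = 0) :
    0 ≤ ∑ i ∈ range n, c i * g i := by
  have h := Finset.sum_range_by_parts c g n
  simp only [smul_eq_mul] at h
  rw [h, htot, mul_zero, zero_sub, neg_nonneg]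
  apply Finset.sum_nonpos
  intro i hi
  rw [Finset.mem_range] at hi
  have h1 : c i ≤ c (i+1) := hc i (i+1) (Nat.le_succ i) (by omega)
  have h2 : ∑ j ∈ range (i+1), g j ≤ 0 := hD (i+1) (by omega)
  exact mul_nonpos_of_nonneg_of_nonpos (by linarith) h2

lemma perterm (a b c : ℝ) (ha : 0 < a) (hb : 0 ≤ b) (hc : c = -Real.log a - 1) :
    b * Real.log b - a * Real.log a ≥ c * (a - b) := by
  rcases eq_or_lt_of_le hb with h0 | hbpos
  · subst hc; rw [← h0]; simp; nlinarith [Real.log_le_sub_one_of_pos ha, ha.le]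
  · have key : b * (Real.log a - Real.log b) ≤ a - b := by
      have := Real.log_le_sub_one_of_pos (div_pos ha hbpos)
      rw [Real.log_div ha.ne' hbpos.ne'] at this
      calc b * (Real.log a - Real.log b) ≤ b * (a/b - 1) := by
            apply mul_le_mul_of_nonneg_left this hbpos.le
        _ = a - b := by field_simp
    subst hc; nlinarith

lemma entropy_maj (n : ℕ) (hn : 1 ≤ n) (x q : ℕ → ℝ)
    (hx0 : ∀ i, i < n → 0 ≤ x i) (hq0 : ∀ i, i < n → 0 ≤ q i)
    (hanti : ∀ i j, i ≤ j → j < n → x j ≤ x i)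
    (hmaj : ∀ k, k ≤ n → ∑ i ∈ range k, x i ≤ ∑ i ∈ range k, q i)
    (htot : ∑ i ∈ range n, x i = ∑ i ∈ range n, q i) :
    -∑ i ∈ range n, x i * Real.log (x i) ≥ -∑ i ∈ range n, q i * Real.log (q i) := by
  have hne : (range n).Nonempty := nonempty_range_iff.mpr (by omega)
  set A := (range n).sup' hne (fun j => -Real.log (x j) - 1) with hA
  set B := (range n).sup' hne (fun j => -Real.log (q j)) with hB
  set C := max A B with hC
  set c : ℕ → ℝ := fun i => if x i = 0 then C else -Real.log (x i) - 1 with hcdef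
  have hpt : ∀ i, i < n → q i * Real.log (q i) - x i * Real.log (x i) ≥ c i * (x i - q i) := by
    intro i hi
    by_cases hxi : x i = 0
    · have hci : c i = C := by simp [hcdef, hxi]
      rw [hci, hxi]
      have hCq : -Real.log (q i) ≤ C :=
        le_trans (Finset.le_sup' (fun j => -Real.log (q j)) (mem_range.mpr hi)) (le_max_right A B)
      have := hq0 i hi
      simp only [Real.log_zero, mul_zero, zero_mul, sub_zero]
      nlinarith
    · exact perterm (x i) (q i) (c i) (lt_of_le_of_ne (hx0 i hi) (Ne.symm hxi)) (hq0 i hi)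
        (by simp [hcdef, hxi])
  have hmono : ∀ i j, i ≤ j → j < n → c i ≤ c j := by
    intro i j hij hj
    by_cases hxj : x j = 0
    · by_cases hxi : x i = 0
      · simp [hcdef, hxi, hxj]
      · simp only [hcdef, if_neg hxi, if_pos hxj]
        exact le_trans
          (Finset.le_sup' (fun j => -Real.log (x j) - 1)
            (mem_range.mpr (lt_of_le_of_lt hij hj)))
          (le_max_left A B)
    · have hxi : x i ≠ 0 := by
        intro h
        exact hxj (le_antisymm (by rw [← h]; exact hanti i j hij hj) (hx0 j hj))
      simp only [hcdef, if_neg hxi, if_neg hxj]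
      have h1 : 0 < x j := lt_of_le_of_ne (hx0 j hj) (Ne.symm hxj)
      have h2 : x j ≤ x i := hanti i j hij hj
      have := Real.log_le_log h1 h2
      linarith
  have habel : 0 ≤ ∑ i ∈ range n, c i * (x i - q i) := by
    apply abel_nonneg n c _ hmono
    · intro k hk
      rw [Finset.sum_sub_distrib]
      have := hmaj k hk
      linarith
    · rw [Finset.sum_sub_distrib, htot, sub_self]
  have hsum : ∑ i ∈ range n, c i * (x i - q i) ≤
      ∑ i ∈ range n, (q i * Real.log (q i) - x i * Real.log (x i)) := by
    apply Finset.sum_le_sum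
    intro i hi
    exact hpt i (mem_range.mp hi)
  rw [Finset.sum_sub_distrib] at hsum
  linarith

lemma unitary_col_sum {d : ℕ} {U : Matrix (Fin d) (Fin d) ℂ}
    (hU : U ∈ Matrix.unitaryGroup (Fin d) ℂ) (x : Fin d → ℂ) :
    ∑ i, ‖∑ a, (starRingEnd ℂ) (x a) * U a i‖^2 = ∑ a, ‖x a‖^2 := by
  have hwv : ∀ i, ∑ a, (starRingEnd ℂ) (x a) * U a i = ((star x) ᵥ* U) i := by
    intro i
    rw [Matrix.vecMul, dotProduct]
    simp only [Pi.star_apply, starRingEnd_apply]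
  have key : ((star x) ᵥ* U) ⬝ᵥ star ((star x) ᵥ* U) = star x ⬝ᵥ x := by
    rw [Matrix.star_vecMul, star_star, Matrix.dotProduct_mulVec, Matrix.vecMul_vecMul]
    have h1 : U * Uᴴ = 1 := by
      have := Matrix.mem_unitaryGroup_iff.mp hU
      simpa [Matrix.star_eq_conjTranspose] using this
    rw [h1, Matrix.vecMul_one]
  have e1 : ∀ z : ℂ, ((‖z‖^2 : ℝ) : ℂ) = z * conj z := by
    intro z
    rw [Complex.mul_conj, Complex.normSq_eq_norm_sq]
  have hcast : ((∑ i, ‖∑ a, (starRingEnd ℂ) (x a) * U a i‖^2 : ℝ) : ℂ)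
      = ((∑ a, ‖x a‖^2 : ℝ) : ℂ) := by
    rw [Complex.ofReal_sum, Complex.ofReal_sum]
    calc (∑ i, ((‖∑ a, (starRingEnd ℂ) (x a) * U a i‖^2 : ℝ) : ℂ))
        = ∑ i, ((star x) ᵥ* U) i * conj (((star x) ᵥ* U) i) := by
          refine Finset.sum_congr rfl fun i _ => ?_
          rw [e1, hwv i]
      _ = ((star x) ᵥ* U) ⬝ᵥ star ((star x) ᵥ* U) := by
          rw [dotProduct]
          simp only [Pi.star_apply, starRingEnd_apply]
      _ = star x ⬝ᵥ x := key
      _ = ∑ a, x a * conj (x a) := by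
          rw [dotProduct]
          simp only [Pi.star_apply, starRingEnd_apply]
          exact Finset.sum_congr rfl fun a _ => mul_comm _ _
      _ = ∑ a, ((‖x a‖^2 : ℝ) : ℂ) := Finset.sum_congr rfl fun a _ => (e1 _).symm
  exact_mod_cast hcast

lemma unitary_col_norm {d : ℕ} {U : Matrix (Fin d) (Fin d) ℂ}
    (hU : U ∈ Matrix.unitaryGroup (Fin d) ℂ) (i : Fin d) :
    ∑ a, ‖U a i‖^2 = 1 := by
  classical
  have h1 : Uᴴ * U = 1 := by
    have := Matrix.mem_unitaryGroup_iff'.mp hU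
    simpa [Matrix.star_eq_conjTranspose] using this
  have h2 : ∑ a, (starRingEnd ℂ) (U a i) * U a i = 1 := by
    have := congrFun (congrFun h1 i) i
    rw [Matrix.mul_apply] at this
    simp only [Matrix.conjTranspose_apply, Matrix.one_apply_eq] at this
    simpa only [starRingEnd_apply] using this
  have e1 : ∀ z : ℂ, ((‖z‖^2 : ℝ) : ℂ) = (starRingEnd ℂ) z * z := by
    intro z
    rw [Complex.conj_mul']; push_cast; ring
  have : ((∑ a, ‖U a i‖^2 : ℝ) : ℂ) = ((1:ℝ):ℂ) := by
    rw [Complex.ofReal_sum]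
    rw [show (∑ a, ((‖U a i‖^2 : ℝ):ℂ)) = ∑ a, (starRingEnd ℂ) (U a i) * U a i from
      Finset.sum_congr rfl fun a _ => e1 _]
    rw [h2]; norm_num
  exact_mod_cast this

section
variable {d L : ℕ} (U : Fin L → Matrix (Fin d) (Fin d) ℂ)

lemma cs_complex {ι : Type*} (t : Finset ι) (a y : ι → ℂ) :
    ‖∑ s ∈ t, a s * y s‖ ≤ √(∑ s ∈ t, ‖a s‖^2) * √(∑ s ∈ t, ‖y s‖^2) := by
  calc ‖∑ s ∈ t, a s * y s‖ ≤ ∑ s ∈ t, ‖a s * y s‖ := norm_sum_le t _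
    _ = ∑ s ∈ t, ‖a s‖ * ‖y s‖ := by simp [norm_mul]
    _ ≤ _ := Real.sum_mul_le_sqrt_mul_sqrt t _ _

-- value rewrite: double sum = single sum over S of a-coefficients times y
lemma value_eq (S : Finset (Fin d × Fin L)) (x : Fin d → ℂ) (y : S → ℂ) :
    ∑ a, ∑ s : S, (starRingEnd ℂ) (x a) * U s.1.2 a s.1.1 * y s
      = ∑ s : S, (∑ a, (starRingEnd ℂ) (x a) * U s.1.2 a s.1.1) * y s := by
  rw [Finset.sum_comm]
  exact Finset.sum_congr rfl fun s _ => by rw [Finset.sum_mul]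

lemma elt_le (hU : ∀ j, U j ∈ Matrix.unitaryGroup (Fin d) ℂ)
    (S : Finset (Fin d × Fin L)) (x : Fin d → ℂ) (y : S → ℂ)
    (hx : ∑ a, ‖x a‖ ^ 2 = 1) (hy : ∑ s, ‖y s‖ ^ 2 = 1) :
    ‖∑ a, ∑ s : S, (starRingEnd ℂ) (x a) * U s.1.2 a s.1.1 * y s‖
      ≤ √(min (S.card : ℝ) (L : ℝ)) := by
  rw [value_eq]
  set f : Fin d × Fin L → ℂ := fun t => ∑ a, (starRingEnd ℂ) (x a) * U t.2 a t.1 with hf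
  have hA : ∀ s : ↥S, (∑ a, (starRingEnd ℂ) (x a) * U s.1.2 a s.1.1) = f s.1 := fun s => rfl
  have h1 : ∀ t : Fin d × Fin L, ‖f t‖ ≤ 1 := by
    intro t
    have := cs_complex Finset.univ (fun a => (starRingEnd ℂ) (x a)) (fun a => U t.2 a t.1)
    have hnc : ∑ a, ‖(starRingEnd ℂ) (x a)‖^2 = 1 := by
      simpa [RCLike.norm_conj] using hx
    have hcol : ∑ a, ‖U t.2 a t.1‖^2 = 1 := unitary_col_norm (hU t.2) t.1
    calc ‖f t‖ ≤ √(∑ a, ‖(starRingEnd ℂ) (x a)‖^2) * √(∑ a, ‖U t.2 a t.1‖^2) := this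
      _ = 1 := by rw [hnc, hcol]; simp
  have hsum1 : ∑ s : ↥S, ‖f s.1‖^2 ≤ (S.card : ℝ) := by
    calc ∑ s : ↥S, ‖f s.1‖^2 ≤ ∑ _s : ↥S, (1:ℝ) := by
          refine Finset.sum_le_sum fun s _ => ?_
          have := h1 s.1
          nlinarith [norm_nonneg (f s.1)]
      _ = (S.card : ℝ) := by simp
  have hsumL : ∑ s : ↥S, ‖f s.1‖^2 ≤ (L : ℝ) := by
    have e1 : ∑ s : ↥S, ‖f s.1‖^2 = ∑ t ∈ S, ‖f t‖^2 :=
      Finset.sum_coe_sort S (fun t => ‖f t‖^2)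
    have e2 : ∑ t ∈ S, ‖f t‖^2 ≤ ∑ t : Fin d × Fin L, ‖f t‖^2 := by
      apply Finset.sum_le_sum_of_subset_of_nonneg (Finset.subset_univ S)
      intro t _ _; positivity
    have e3 : ∑ t : Fin d × Fin L, ‖f t‖^2 = (L : ℝ) := by
      rw [Fintype.sum_prod_type]
      rw [Finset.sum_comm]
      have : ∀ j : Fin L, ∑ i : Fin d, ‖f (i, j)‖^2 = 1 := by
        intro j
        have := unitary_col_sum (hU j) x
        rw [hx] at this
        exact this
      rw [Finset.sum_congr rfl fun j _ => this j]
      simp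
    linarith
  have hyn : √(∑ s : ↥S, ‖y s‖^2) = 1 := by rw [hy]; simp
  calc ‖∑ s : ↥S, (∑ a, (starRingEnd ℂ) (x a) * U s.1.2 a s.1.1) * y s‖
      ≤ √(∑ s : ↥S, ‖f s.1‖^2) * √(∑ s : ↥S, ‖y s‖^2) := by
        have := cs_complex Finset.univ (fun s : ↥S => f s.1) y
        simpa using this
    _ = √(∑ s : ↥S, ‖f s.1‖^2) := by rw [hyn, mul_one]
    _ ≤ √(min (S.card : ℝ) (L : ℝ)) := by
        apply Real.sqrt_le_sqrt
        exact le_min hsum1 hsumL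

lemma colOpNorm_le (hU : ∀ j, U j ∈ Matrix.unitaryGroup (Fin d) ℂ)
    (S : Finset (Fin d × Fin L)) :
    colOpNorm U S ≤ √(min (S.card : ℝ) (L : ℝ)) := by
  apply Real.sSup_le _ (Real.sqrt_nonneg _)
  rintro r ⟨x, y, hx, hy, rfl⟩
  exact elt_le U hU S x y hx hy

lemma colOpNorm_nonneg (S : Finset (Fin d × Fin L)) : 0 ≤ colOpNorm U S := by
  apply Real.sSup_nonneg
  rintro r ⟨x, y, hx, hy, rfl⟩
  exact norm_nonneg _

lemma colOpNorm_bddAbove (hU : ∀ j, U j ∈ Matrix.unitaryGroup (Fin d) ℂ)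
    (S : Finset (Fin d × Fin L)) :
    BddAbove { r : ℝ | ∃ (x : Fin d → ℂ) (y : S → ℂ),
      (∑ a, ‖x a‖ ^ 2 = 1) ∧ (∑ s, ‖y s‖ ^ 2 = 1) ∧
      r = ‖∑ a, ∑ s : S, (starRingEnd ℂ) (x a) * U s.1.2 a s.1.1 * y s‖ } := by
  refine ⟨√(min (S.card : ℝ) (L : ℝ)), ?_⟩
  rintro r ⟨x, y, hx, hy, rfl⟩
  exact elt_le U hU S x y hx hy

lemma conj_v_eq (x : Fin d → ℂ) (t : Fin d × Fin L) :
    ∑ a, (starRingEnd ℂ) (x a) * U t.2 a t.1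
      = (starRingEnd ℂ) (∑ a, (starRingEnd ℂ) (U t.2 a t.1) * x a) := by
  rw [map_sum]
  refine Finset.sum_congr rfl fun a _ => ?_
  rw [_root_.map_mul, Complex.conj_conj]
  ring

lemma sqrt_le_colOpNorm (hU : ∀ j, U j ∈ Matrix.unitaryGroup (Fin d) ℂ)
    (S : Finset (Fin d × Fin L)) (x : Fin d → ℂ) (hx : ∑ a, ‖x a‖ ^ 2 = 1)
    (hP : 0 < ∑ t ∈ S, ‖∑ a, (starRingEnd ℂ) (U t.2 a t.1) * x a‖ ^ 2) :
    √(∑ t ∈ S, ‖∑ a, (starRingEnd ℂ) (U t.2 a t.1) * x a‖ ^ 2) ≤ colOpNorm U S := by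
  set v : Fin d × Fin L → ℂ := fun t => ∑ a, (starRingEnd ℂ) (U t.2 a t.1) * x a with hv
  set P : ℝ := ∑ t ∈ S, ‖v t‖ ^ 2 with hPdef
  apply le_csSup (colOpNorm_bddAbove U hU S)
  refine ⟨x, fun s => v s.1 / (√P : ℝ), hx, ?_, ?_⟩
  · have : ∀ s : ↥S, ‖v s.1 / (√P : ℝ)‖ ^ 2 = ‖v s.1‖ ^ 2 / P := by
      intro s
      rw [norm_div]
      rw [Complex.norm_real, Real.norm_of_nonneg (Real.sqrt_nonneg P)]
      rw [div_pow, Real.sq_sqrt hP.le]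
    rw [Finset.sum_congr rfl fun s _ => this s]
    rw [← Finset.sum_div]
    rw [Finset.sum_coe_sort S (fun t => ‖v t‖ ^ 2)]
    exact div_self hP.ne'
  · rw [value_eq]
    have hval : ∑ s : ↥S, (∑ a, (starRingEnd ℂ) (x a) * U s.1.2 a s.1.1) * (v s.1 / (√P : ℝ))
        = (P : ℂ) / (√P : ℝ) := by
      have e1 : ∀ s : ↥S, (∑ a, (starRingEnd ℂ) (x a) * U s.1.2 a s.1.1) * (v s.1 / (√P : ℝ))
          = ((starRingEnd ℂ) (v s.1) * v s.1) / (√P : ℝ) := by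
        intro s
        rw [conj_v_eq U x s.1]
        ring
      rw [Finset.sum_congr rfl fun s _ => e1 s, ← Finset.sum_div]
      congr 1
      have e2 : ∀ t : Fin d × Fin L, (starRingEnd ℂ) (v t) * v t = ((‖v t‖ ^ 2 : ℝ) : ℂ) := by
        intro t
        rw [Complex.conj_mul']
        push_cast; ring
      rw [Finset.sum_congr rfl fun s (_ : s ∈ Finset.univ) => e2 s.1]
      rw [show ∑ s : ↥S, ((‖v s.1‖ ^ 2 : ℝ) : ℂ) = ((∑ s : ↥S, ‖v s.1‖ ^ 2 : ℝ) : ℂ) by push_cast; rfl]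
      rw [Finset.sum_coe_sort S (fun t => ‖v t‖ ^ 2)]
    rw [hval, norm_div, Complex.norm_real, Complex.norm_real,
      Real.norm_of_nonneg hP.le, Real.norm_of_nonneg (Real.sqrt_nonneg P), Real.div_sqrt]

lemma colOpNorm_mono (hU : ∀ j, U j ∈ Matrix.unitaryGroup (Fin d) ℂ)
    {S S' : Finset (Fin d × Fin L)} (hss : S ⊆ S') :
    colOpNorm U S ≤ colOpNorm U S' := by
  classical
  apply Real.sSup_le _ (colOpNorm_nonneg U S')
  rintro r ⟨x, y, hx, hy, rfl⟩
  apply le_csSup (colOpNorm_bddAbove U hU S')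
  set F : Fin d × Fin L → ℂ := fun t => if h : t ∈ S then y ⟨t, h⟩ else 0 with hF
  have hFS : ∀ s : ↥S, F s.1 = y s := by
    intro s
    simp only [hF]
    rw [dif_pos s.2]
  refine ⟨x, fun s => F s.1, hx, ?_, ?_⟩
  · rw [Finset.sum_coe_sort S' (fun t => ‖F t‖ ^ 2)]
    rw [← Finset.sum_subset hss (fun t _ hnt => by simp only [hF]; rw [dif_neg hnt]; simp)]
    rw [← Finset.sum_coe_sort S (fun t => ‖F t‖ ^ 2)]
    rw [← hy]
    exact Finset.sum_congr rfl fun s _ => by rw [hFS s]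
  · rw [value_eq, value_eq]
    congr 1
    set G : Fin d × Fin L → ℂ :=
      fun t => (∑ a, (starRingEnd ℂ) (x a) * U t.2 a t.1) * F t with hG
    have e1 : ∑ s : ↥S, (∑ a, (starRingEnd ℂ) (x a) * U s.1.2 a s.1.1) * y s
        = ∑ s : ↥S, G s.1 := by
      refine Finset.sum_congr rfl fun s _ => ?_
      rw [hG]
      simp only
      rw [hFS s]
    rw [e1, Finset.sum_coe_sort S G, Finset.sum_coe_sort S' G]
    exact Finset.sum_subset hss fun t _ hnt => by
      simp only [hG, hF]
      rw [dif_neg hnt, mul_zero]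

def Bset (k : ℕ) : Set ℝ :=
  { r : ℝ | ∃ S : Finset (Fin d × Fin L), S.card = k + 1 ∧ r = colOpNorm U S }

lemma multiS_eq (k : ℕ) : multiS U k = (sSup (Bset U k)) ^ 2 := rfl

lemma sSupB_nonneg (k : ℕ) : 0 ≤ sSup (Bset U k) := by
  apply Real.sSup_nonneg
  rintro r ⟨S, _, rfl⟩
  exact colOpNorm_nonneg U S

lemma sSupB_bddAbove (hU : ∀ j, U j ∈ Matrix.unitaryGroup (Fin d) ℂ) (k : ℕ) :
    BddAbove (Bset U k) := by
  refine ⟨√((k : ℝ) + 1), ?_⟩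
  rintro r ⟨S, hc, rfl⟩
  refine le_trans (colOpNorm_le U hU S) (Real.sqrt_le_sqrt ?_)
  rw [hc]
  push_cast
  exact min_le_left _ _

lemma multiS_nonneg (k : ℕ) : 0 ≤ multiS U k := sq_nonneg _

lemma sum_p_le_multiS (hU : ∀ j, U j ∈ Matrix.unitaryGroup (Fin d) ℂ)
    (x : Fin d → ℂ) (hx : ∑ a, ‖x a‖ ^ 2 = 1) (k : ℕ) (S : Finset (Fin d × Fin L))
    (hcard : S.card = k + 1) :
    ∑ t ∈ S, ‖∑ a, (starRingEnd ℂ) (U t.2 a t.1) * x a‖ ^ 2 ≤ multiS U k := by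
  set P : ℝ := ∑ t ∈ S, ‖∑ a, (starRingEnd ℂ) (U t.2 a t.1) * x a‖ ^ 2 with hPdef
  have hP0 : 0 ≤ P := by positivity
  rcases eq_or_lt_of_le hP0 with h | h
  · rw [← h]
    exact multiS_nonneg U k
  · have h1 := sqrt_le_colOpNorm U hU S x hx h
    have h2 : colOpNorm U S ≤ sSup (Bset U k) :=
      le_csSup (sSupB_bddAbove U hU k) ⟨S, hcard, rfl⟩
    calc P = (√P) ^ 2 := (Real.sq_sqrt hP0).symm
      _ ≤ (sSup (Bset U k)) ^ 2 :=
          pow_le_pow_left₀ (Real.sqrt_nonneg P) (le_trans h1 h2) 2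
      _ = multiS U k := (multiS_eq U k).symm

lemma multiS_mono (hU : ∀ j, U j ∈ Matrix.unitaryGroup (Fin d) ℂ) (k : ℕ)
    (hk : k + 2 ≤ d * L) : multiS U k ≤ multiS U (k + 1) := by
  have hs : sSup (Bset U k) ≤ sSup (Bset U (k + 1)) := by
    apply Real.sSup_le _ (sSupB_nonneg U (k + 1))
    rintro r ⟨S, hc, rfl⟩
    obtain ⟨S', hss, hc'⟩ := Finset.exists_subsuperset_card_eq (n := k + 2) (Finset.subset_univ S)
      (by omega) (by simp only [Finset.card_univ, Fintype.card_prod, Fintype.card_fin]; omega)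
    exact le_trans (colOpNorm_mono U hU hss)
      (le_csSup (sSupB_bddAbove U hU (k + 1)) ⟨S', by omega, rfl⟩)
  rw [multiS_eq, multiS_eq]
  exact pow_le_pow_left₀ (sSupB_nonneg U k) hs 2

lemma multiS_zero_le_one (hU : ∀ j, U j ∈ Matrix.unitaryGroup (Fin d) ℂ) (hL : 1 ≤ L) :
    multiS U 0 ≤ 1 := by
  have hs : sSup (Bset U 0) ≤ 1 := by
    apply Real.sSup_le _ zero_le_one
    rintro r ⟨S, hc, rfl⟩
    refine le_trans (colOpNorm_le U hU S) ?_
    have h1 : min ((S.card : ℝ)) (L : ℝ) ≤ 1 := by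
      rw [hc]
      push_cast
      exact le_trans (min_le_left _ _) (by norm_num)
    refine le_trans (Real.sqrt_le_sqrt h1) ?_
    rw [Real.sqrt_one]
  rw [multiS_eq]
  calc (sSup (Bset U 0)) ^ 2 ≤ 1 ^ 2 := pow_le_pow_left₀ (sSupB_nonneg U 0) hs 2
    _ = 1 := one_pow 2

lemma total_sum (hU : ∀ j, U j ∈ Matrix.unitaryGroup (Fin d) ℂ)
    (x : Fin d → ℂ) (hx : ∑ a, ‖x a‖ ^ 2 = 1) :
    ∑ t : Fin d × Fin L, ‖∑ a, (starRingEnd ℂ) (U t.2 a t.1) * x a‖ ^ 2 = (L : ℝ) := by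
  have e : ∀ t : Fin d × Fin L,
      ‖∑ a, (starRingEnd ℂ) (U t.2 a t.1) * x a‖ = ‖∑ a, (starRingEnd ℂ) (x a) * U t.2 a t.1‖ := by
    intro t
    rw [conj_v_eq U x t, RCLike.norm_conj]
  rw [Finset.sum_congr rfl fun t _ => by rw [e t]]
  rw [Fintype.sum_prod_type, Finset.sum_comm]
  have : ∀ j : Fin L, ∑ i : Fin d, ‖∑ a, (starRingEnd ℂ) (x a) * U j a i‖ ^ 2 = 1 := by
    intro j
    rw [unitary_col_sum (hU j) x, hx]
  rw [Finset.sum_congr rfl fun j _ => this j]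
  simp

lemma multiS_top (hU : ∀ j, U j ∈ Matrix.unitaryGroup (Fin d) ℂ)
    (hd : 1 ≤ d) (hL : 1 ≤ L)
    (x : Fin d → ℂ) (hx : ∑ a, ‖x a‖ ^ 2 = 1) :
    multiS U (d * L - 1) = (L : ℝ) := by
  have hn : 1 ≤ d * L := Nat.one_le_iff_ne_zero.mpr (by positivity)
  have hup : sSup (Bset U (d * L - 1)) ≤ √(L : ℝ) := by
    apply Real.sSup_le _ (Real.sqrt_nonneg _)
    rintro r ⟨S, hc, rfl⟩
    exact le_trans (colOpNorm_le U hU S) (Real.sqrt_le_sqrt (min_le_right _ _))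
  have htot := total_sum U hU x hx
  have hLpos : (0:ℝ) < L := by exact_mod_cast hL
  have hlow : √(L : ℝ) ≤ sSup (Bset U (d * L - 1)) := by
    have h1 : √(L : ℝ) ≤ colOpNorm U Finset.univ := by
      have := sqrt_le_colOpNorm U hU Finset.univ x hx (by rw [htot]; exact hLpos)
      rwa [htot] at this
    refine le_trans h1 (le_csSup (sSupB_bddAbove U hU (d * L - 1)) ⟨Finset.univ, ?_, rfl⟩)
    simp only [Finset.card_univ, Fintype.card_prod, Fintype.card_fin]
    omega
  rw [multiS_eq, le_antisymm hup hlow, Real.sq_sqrt hLpos.le]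

end

/-- **Entropic uncertainty relation for several measurements**: with
`p (i, j) = |⟨u_i^{(j)}, ψ⟩|²`, the sum of the `L` Shannon entropies satisfies
`∑ⱼ H(p^{(j)}) ≥ -∑_{k=1}^{dL-1} (𝒮_k - 𝒮_{k-1}) ln(𝒮_k - 𝒮_{k-1})`. -/
theorem stmt_14 (d L : ℕ) (hd : 1 ≤ d) (hL : 1 ≤ L)
    (U : Fin L → Matrix (Fin d) (Fin d) ℂ)
    (hU : ∀ j, U j ∈ Matrix.unitaryGroup (Fin d) ℂ)
    (ψ : Fin d → ℂ) (hψ : ∑ a, ‖ψ a‖ ^ 2 = 1)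
    (p : Fin d × Fin L → ℝ)
    (hp : ∀ i j, p (i, j) = ‖∑ a, (starRingEnd ℂ) (U j a i) * ψ a‖ ^ 2) :
    ∑ j, shannonEntropy (fun i => p (i, j)) ≥
      -∑ k ∈ Finset.range (d * L - 1),
        (multiS U (k + 1) - multiS U k) * Real.log (multiS U (k + 1) - multiS U k) := by
  classical
  have hn1 : 1 ≤ d * L := Nat.one_le_iff_ne_zero.mpr (by positivity)
  have hp' : ∀ t : Fin d × Fin L, p t = ‖∑ a, (starRingEnd ℂ) (U t.2 a t.1) * ψ a‖ ^ 2 := by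
    intro t
    have := hp t.1 t.2
    rwa [Prod.mk.eta] at this
  have hp0 : ∀ t, 0 ≤ p t := fun t => by rw [hp' t]; positivity
  set e : Fin d × Fin L ≃ Fin (d * L) := finProdFinEquiv with he
  set p' : Fin (d * L) → ℝ := fun i => p (e.symm i) with hpdef
  set σ : Equiv.Perm (Fin (d * L)) := Tuple.sort p' with hσdef
  have hσ : Monotone (p' ∘ σ) := Tuple.monotone_sort p'
  set g : ℕ → Fin d × Fin L :=
    fun i => e.symm (σ ⟨(d * L - 1 - i) % (d * L), Nat.mod_lt _ (by omega)⟩) with hg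
  set x : ℕ → ℝ := fun i => p (g i) with hx
  -- q
  set q : ℕ → ℝ := fun i => if i = 0 then multiS U 0 else multiS U i - multiS U (i - 1) with hq
  have hx0 : ∀ i, i < d * L → 0 ≤ x i := fun i _ => hp0 _
  have hanti : ∀ i j, i ≤ j → j < d * L → x j ≤ x i := by
    intro i j hij hj
    have hiL : i < d * L := lt_of_le_of_lt hij hj
    have h1 : (d * L - 1 - j) % (d * L) = d * L - 1 - j := Nat.mod_eq_of_lt (by omega)
    have h2 : (d * L - 1 - i) % (d * L) = d * L - 1 - i := Nat.mod_eq_of_lt (by omega)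
    have : (⟨(d * L - 1 - j) % (d * L), Nat.mod_lt _ (by omega)⟩ : Fin (d * L))
        ≤ ⟨(d * L - 1 - i) % (d * L), Nat.mod_lt _ (by omega)⟩ := by
      simp only [Fin.mk_le_mk, h1, h2]
      omega
    exact hσ this
  -- injectivity of g on range k for k ≤ n
  have hginj : ∀ k, k ≤ d * L → ∀ i ∈ range k, ∀ j ∈ range k, g i = g j → i = j := by
    intro k hk i hi j hj hgij
    rw [mem_range] at hi hj
    have h1 := e.symm.injective hgij
    have h2 := σ.injective h1
    have h3 : (d * L - 1 - i) % (d * L) = (d * L - 1 - j) % (d * L) := congrArg Fin.val h2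
    rw [Nat.mod_eq_of_lt (by omega), Nat.mod_eq_of_lt (by omega)] at h3
    omega
  have hsum : ∀ k, k ≤ d * L →
      ∑ i ∈ range k, x i = ∑ t ∈ (range k).image g, p t := by
    intro k hk
    rw [Finset.sum_image (hginj k hk)]
  have hcardT : ∀ k, k ≤ d * L → ((range k).image g).card = k := by
    intro k hk
    rw [Finset.card_image_of_injOn (fun i hi j hj => hginj k hk i hi j hj), Finset.card_range]
  -- partial sums of q
  have hYsum : ∀ k, 1 ≤ k → ∑ i ∈ range k, q i = multiS U (k - 1) := by
    intro k hk
    induction k with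
    | zero => omega
    | succ m ih =>
      rcases Nat.eq_zero_or_pos m with hm | hm
      · subst hm
        simp [hq]
      · rw [Finset.sum_range_succ, ih hm]
        have : q m = multiS U m - multiS U (m - 1) := by
          rw [hq]
          simp only [if_neg (by omega : ¬ m = 0)]
        rw [this]
        have : m + 1 - 1 = m := by omega
        rw [this]
        ring
  have hq0 : ∀ i, i < d * L → 0 ≤ q i := by
    intro i hi
    rw [hq]
    by_cases h0 : i = 0
    · simp only [if_pos h0]
      exact multiS_nonneg U 0
    · simp only [if_neg h0]
      have := multiS_mono U hU (i - 1) (by omega)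
      have hi1 : i - 1 + 1 = i := by omega
      rw [hi1] at this
      linarith
  have hmaj : ∀ k, k ≤ d * L → ∑ i ∈ range k, x i ≤ ∑ i ∈ range k, q i := by
    intro k hk
    rcases Nat.eq_zero_or_pos k with h0 | h0
    · subst h0; simp
    · rw [hsum k hk, hYsum k h0]
      have hc : ((range k).image g).card = k - 1 + 1 := by rw [hcardT k hk]; omega
      have := sum_p_le_multiS U hU ψ hψ (k - 1) ((range k).image g) hc
      refine le_trans (le_of_eq ?_) this
      exact Finset.sum_congr rfl fun t _ => hp' t
  have htotp : ∑ t : Fin d × Fin L, p t = (L : ℝ) := by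
    rw [Finset.sum_congr rfl fun t _ => hp' t]
    exact total_sum U hU ψ hψ
  have htot : ∑ i ∈ range (d * L), x i = ∑ i ∈ range (d * L), q i := by
    rw [hsum (d * L) le_rfl, hYsum (d * L) hn1]
    have hTuniv : (range (d * L)).image g = Finset.univ := by
      apply Finset.eq_univ_of_card
      rw [hcardT (d * L) le_rfl]
      simp [Fintype.card_prod]
    rw [hTuniv, htotp, multiS_top U hU hd hL ψ hψ]
  have key := entropy_maj (d * L) hn1 x q hx0 hq0 hanti hmaj htot
  -- LHS identification
  have hLHS : ∑ j, shannonEntropy (fun i => p (i, j))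
      = -∑ i ∈ range (d * L), x i * Real.log (x i) := by
    have e1 : ∑ j, shannonEntropy (fun i => p (i, j))
        = -∑ t : Fin d × Fin L, p t * Real.log (p t) := by
      simp only [shannonEntropy]
      rw [← Finset.sum_neg_distrib]
      rw [Fintype.sum_prod_type]
      rw [Finset.sum_comm]
      simp
    rw [e1]
    congr 1
    have hTuniv : (range (d * L)).image g = Finset.univ := by
      apply Finset.eq_univ_of_card
      rw [hcardT (d * L) le_rfl]
      simp [Fintype.card_prod]
    rw [← hTuniv, Finset.sum_image (hginj (d * L) le_rfl)]
  -- RHS identification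
  have hq00 : 0 ≤ q 0 := hq0 0 (by omega)
  have hq01 : q 0 ≤ 1 := by
    rw [hq]
    simp only [if_pos rfl]
    exact multiS_zero_le_one U hU hL
  have hRHS : -∑ i ∈ range (d * L), q i * Real.log (q i)
      ≥ -∑ k ∈ Finset.range (d * L - 1),
          (multiS U (k + 1) - multiS U k) * Real.log (multiS U (k + 1) - multiS U k) := by
    have hsplit : ∑ i ∈ range (d * L), q i * Real.log (q i)
        = (∑ i ∈ range (d * L - 1), q (i + 1) * Real.log (q (i + 1))) + q 0 * Real.log (q 0) := by
      have hdl : d * L = (d * L - 1) + 1 := by omega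
      conv_lhs => rw [hdl]
      rw [Finset.sum_range_succ']
    have hq1 : ∀ i : ℕ, q (i + 1) = multiS U (i + 1) - multiS U i := by
      intro i
      rw [hq]
      simp only [if_neg (Nat.succ_ne_zero i), Nat.add_sub_cancel]
    have hlog0 : q 0 * Real.log (q 0) ≤ 0 :=
      mul_nonpos_of_nonneg_of_nonpos hq00 (Real.log_nonpos hq00 hq01)
    rw [hsplit]
    have : ∑ i ∈ range (d * L - 1), q (i + 1) * Real.log (q (i + 1))
        = ∑ k ∈ Finset.range (d * L - 1),
          (multiS U (k + 1) - multiS U k) * Real.log (multiS U (k + 1) - multiS U k) := by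
      exact Finset.sum_congr rfl fun i _ => by rw [hq1 i]
    rw [this]
    linarith
  rw [hLHS]
  exact le_trans hRHS key
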